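/- Let (F, <_F) and (G, <_G) be ordered groups. Then there exists a bi-invariant strict total order ≺ on F * G extending <_F and <_G along the canonical inclusions, such that the kernel of the canonical homomorphism α : F * G → F × G is a convex subgroup of (F * G, ≺). -/

import Mathlib

set_option linter.unusedSectionVars false
set_option maxHeartbeats 1600000


/-- A bi-invariant strict total order on a group. -/
def IsBiOrder {G : Type*} [Group G] (lt : G → G → Prop) : Prop :=
  IsStrictTotalOrder G lt ∧ (∀ x y z : G, lt x y → lt (x * z) (y * z)) ∧
    (∀ x y z : G, lt x y → lt (z * x) (z * y))



theorem IsBiOrder.lt_irrefl {G : Type*} [Group G] {lt : G → G → Prop} (h : IsBiOrder lt) (a : G) :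
    ¬ lt a a := by
  haveI := h.1
  exact _root_.irrefl a

theorem IsBiOrder.lt_trans {G : Type*} [Group G] {lt : G → G → Prop} (h : IsBiOrder lt)
    {a b c : G} : lt a b → lt b c → lt a c := by
  haveI := h.1
  exact fun h1 h2 => _root_.trans h1 h2

theorem IsBiOrder.lt_trichot {G : Type*} [Group G] {lt : G → G → Prop} (h : IsBiOrder lt)
    (a b : G) : lt a b ∨ a = b ∨ lt b a := by
  haveI := h.1
  exact trichotomous a b

/-- The canonical homomorphism `F * G → F × G` induced by the inclusions
`F → F × G` and `G → F × G`. -/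
def canonicalMap (F G : Type*) [Group F] [Group G] : Monoid.Coprod F G →* F × G :=
  Monoid.Coprod.lift (MonoidHom.inl F G) (MonoidHom.inr F G)

namespace CMKC

instance {R M : Type*} [Semiring R] : CoeFun (MonoidAlgebra R M) (fun _ => M → R) :=
  ⟨fun x => x.coeff⟩

variable {α : Type*}

/-- Strict lexicographic order on lists. -/
def llex (r : α → α → Prop) : List α → List α → Prop
  | [], [] => False
  | [], _ :: _ => True
  | _ :: _, [] => False
  | a :: l, b :: m => r a b ∨ (a = b ∧ llex r l m)

theorem llex_irrefl (r : α → α → Prop) (hi : ∀ a, ¬ r a a) : ∀ l, ¬ llex r l l := by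
  intro l
  induction l with
  | nil => simp [llex]
  | cons a l ih =>
    intro h
    simp only [llex] at h
    rcases h with h | ⟨-, h⟩
    · exact hi a h
    · exact ih h

theorem llex_trans (r : α → α → Prop) (ht : ∀ {a b c}, r a b → r b c → r a c) :
    ∀ {l m n}, llex r l m → llex r m n → llex r l n := by
  intro l
  induction l with
  | nil =>
    intro m n h1 h2
    cases m with
    | nil => exact absurd h1 (by simp [llex])
    | cons b m => cases n with
      | nil => exact absurd h2 (by simp [llex])
      | cons c n => simp [llex]
  | cons a l ih =>
    intro m n h1 h2
    cases m with
    | nil => exact absurd h1 (by simp [llex])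
    | cons b m =>
      cases n with
      | nil => exact absurd h2 (by simp [llex])
      | cons c n =>
        rcases h1 with h1 | ⟨rfl, h1⟩
        · rcases h2 with h2 | ⟨rfl, h2⟩
          · exact Or.inl (ht h1 h2)
          · exact Or.inl h1
        · rcases h2 with h2 | ⟨rfl, h2⟩
          · exact Or.inl h2
          · exact Or.inr ⟨rfl, ih h1 h2⟩

theorem llex_trichot (r : α → α → Prop) (htr : ∀ a b, r a b ∨ a = b ∨ r b a) :
    ∀ l m, llex r l m ∨ l = m ∨ llex r m l := by
  intro l
  induction l with
  | nil =>
    intro m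
    cases m with
    | nil => simp [llex]
    | cons b m => exact Or.inl (by simp [llex])
  | cons a l ih =>
    intro m
    cases m with
    | nil => exact Or.inr (Or.inr (by simp [llex]))
    | cons b m =>
      rcases htr a b with h | rfl | h
      · exact Or.inl (Or.inl h)
      · rcases ih m with h | rfl | h
        · exact Or.inl (Or.inr ⟨rfl, h⟩)
        · exact Or.inr (Or.inl rfl)
        · exact Or.inr (Or.inr (Or.inr ⟨rfl, h⟩))
      · exact Or.inr (Or.inr (Or.inl h))

variable [DecidableEq α]

/-- number of runs (maximal constant blocks) in a list -/
def runs : List α → ℕ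
  | [] => 0
  | [_] => 1
  | a :: b :: l => (if a = b then 0 else 1) + runs (b :: l)

theorem runs_cons_cons (a b : α) (l : List α) :
    runs (a :: b :: l) = (if a = b then 0 else 1) + runs (b :: l) := by
  rfl

theorem runs_append_le : ∀ u v : List α, runs (u ++ v) ≤ runs u + runs v := by
  intro u
  induction u with
  | nil => intro v; simp [runs]
  | cons a u ih =>
    intro v
    cases u with
    | nil =>
      cases v with
      | nil => simp [runs]
      | cons b v =>
        show runs (a :: b :: v) ≤ 1 + runs (b :: v)
        rw [runs_cons_cons]
        have : (if a = b then 0 else 1) ≤ 1 := by split <;> omega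
        omega
    | cons c u' =>
      have e1 : (a :: c :: u') ++ v = a :: c :: (u' ++ v) := by simp
      rw [e1, runs_cons_cons, runs_cons_cons]
      have h2 := ih v
      rw [List.cons_append] at h2
      omega

theorem runs_replicate_le (n : ℕ) (s : α) : runs (List.replicate n s) ≤ 1 := by
  induction n with
  | zero => simp [runs]
  | succ n ih =>
    cases n with
    | zero => simp [runs]
    | succ m =>
      have e : List.replicate (m+2) s = s :: s :: List.replicate m s := by
        simp [List.replicate_succ]
      have e' : List.replicate (m+1) s = s :: List.replicate m s := by
        simp [List.replicate_succ]
      rw [e, runs_cons_cons, if_pos rfl, ← e']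
      simpa using ih

/-- `patt ss n w` : `w` is a concatenation of blocks `replicate r_i s_i` with `∑ r_i = n`. -/
def patt : List α → ℕ → List α → Prop
  | [], n, w => n = 0 ∧ w = []
  | s :: ss, n, w => ∃ r k w', r + k = n ∧ patt ss k w' ∧ w = List.replicate r s ++ w'

theorem runs_patt_le : ∀ ss : List α, ∀ n w, patt ss n w → runs w ≤ ss.length := by
  intro ss
  induction ss with
  | nil => rintro n w ⟨_, rfl⟩; simp [runs]
  | cons s ss ih =>
    rintro n w ⟨r, k, w', _, hp, rfl⟩
    calc runs (List.replicate r s ++ w') ≤ runs (List.replicate r s) + runs w' :=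
          runs_append_le _ _
      _ ≤ 1 + ss.length := by
          have h1 := runs_replicate_le (α := α) r s
          have h2 := ih k w' hp
          omega
      _ = (s :: ss).length := by simp [Nat.add_comm]

/-- double each letter -/
def wsq : List α → List α := fun l => l.flatMap fun s => [s, s]

theorem wsq_nil : wsq ([] : List α) = [] := rfl

theorem wsq_cons (s : α) (ss : List α) : wsq (s :: ss) = s :: s :: wsq ss := rfl

theorem runs_cons_wsq :
    ∀ ss : List α, ∀ s : α, List.Chain' (· ≠ ·) (s :: ss) →
      runs (s :: wsq ss) = 1 + ss.length ∧ runs (s :: s :: wsq ss) = 1 + ss.length := by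
  intro ss
  induction ss with
  | nil =>
    intro s _
    constructor
    · simp [wsq, runs]
    · rw [wsq_nil, runs_cons_cons, if_pos rfl]; simp [runs]
  | cons s₁ ss ih =>
    intro s hch
    have hne : s ≠ s₁ := (List.isChain_cons_cons.mp hch).1
    have hch' : List.Chain' (· ≠ ·) (s₁ :: ss) := (List.isChain_cons_cons.mp hch).2
    have IH := ih s₁ hch'
    have key : runs (s :: wsq (s₁ :: ss)) = 1 + (s₁ :: ss).length := by
      rw [wsq_cons, runs_cons_cons, if_neg hne, IH.2]
      simp [Nat.add_comm]
    refine ⟨key, ?_⟩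
    rw [wsq_cons, runs_cons_cons, if_pos rfl, ← wsq_cons]
    rw [wsq_cons] at key ⊢
    omega


/-- Alternating strings `h₀ s₁ h₁ … s_n h_n` over `H = F × G` with separators in `Bool`. -/
structure TStr (F G : Type*) where
  lst : List ((F × G) × Bool)
  fin : F × G

section TMon

variable {F G : Type*} [Group F] [Group G]

namespace TStr

protected def tmul : TStr F G → TStr F G → TStr F G
  | ⟨L, h⟩, ⟨[], h'⟩ => ⟨L, h * h'⟩
  | ⟨L, h⟩, ⟨(k, s) :: r, h'⟩ => ⟨L ++ (h * k, s) :: r, h'⟩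

instance : Mul (TStr F G) := ⟨TStr.tmul⟩
instance : One (TStr F G) := ⟨⟨[], 1⟩⟩

theorem one_def : (1 : TStr F G) = ⟨[], 1⟩ := rfl

theorem mul_nil (L : List ((F × G) × Bool)) (h h' : F × G) :
    (⟨L, h⟩ : TStr F G) * ⟨[], h'⟩ = ⟨L, h * h'⟩ := rfl

theorem mul_cons (L : List ((F × G) × Bool)) (h : F × G) (k : F × G) (s : Bool)
    (r : List ((F × G) × Bool)) (h' : F × G) :
    (⟨L, h⟩ : TStr F G) * ⟨(k, s) :: r, h'⟩ = ⟨L ++ (h * k, s) :: r, h'⟩ := rfl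

instance : Monoid (TStr F G) where
  one_mul := by
    rintro ⟨L, h⟩
    cases L with
    | nil => rw [one_def, mul_nil, one_mul]
    | cons p r =>
      obtain ⟨k, s⟩ := p
      rw [one_def, mul_cons, one_mul, List.nil_append]
  mul_one := by rintro ⟨L, h⟩; rw [one_def, mul_nil, mul_one]
  mul_assoc := by
    rintro ⟨L, h⟩ ⟨M, i⟩ ⟨N, j⟩
    cases M with
    | nil =>
      cases N with
      | nil => simp only [mul_nil, mul_assoc]
      | cons p N' =>
        obtain ⟨n, u⟩ := p
        simp only [mul_nil, mul_cons, List.nil_append, mul_assoc]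
    | cons q M' =>
      obtain ⟨m, s⟩ := q
      cases N with
      | nil => simp only [mul_cons, mul_nil]
      | cons p N' =>
        obtain ⟨n, u⟩ := p
        simp only [List.cons_append, mul_cons, List.append_assoc]

/-- embedding of `F × G` -/
def emb : F × G →* TStr F G where
  toFun h := ⟨[], h⟩
  map_one' := rfl
  map_mul' a b := by rw [mul_nil]

theorem emb_def (h : F × G) : (emb h : TStr F G) = ⟨[], h⟩ := rfl

/-- the separator letter -/
def sep (s : Bool) : TStr F G := ⟨[(1, s)], 1⟩

theorem sep_pow (s : Bool) : ∀ n : ℕ, (sep s : TStr F G) ^ n = ⟨List.replicate n (1, s), 1⟩ := by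
  intro n
  induction n with
  | zero => rfl
  | succ n ih =>
    rw [pow_succ, ih, sep, mul_cons]
    simp [List.replicate_succ' (n := n), mul_one]

/-- string `s^n · h` -/
def uA (s : Bool) (n : ℕ) (h : F × G) : TStr F G := ⟨List.replicate n (1, s), h⟩

/-- string `s^n · h · s` -/
def uB (s : Bool) (n : ℕ) (h : F × G) : TStr F G := ⟨List.replicate n (1, s) ++ [(h, s)], 1⟩

theorem uA_eq (s : Bool) (n : ℕ) (h : F × G) : (sep s : TStr F G) ^ n * emb h = uA s n h := by
  rw [sep_pow, emb_def, mul_nil, one_mul]; rfl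

theorem uB_eq (s : Bool) (n : ℕ) (h : F × G) : uA s n h * (sep s : TStr F G) = uB s n h := by
  rw [uA, sep, mul_cons, mul_one]; rfl

/-- the basic block `1 s h s 1` -/
def pad (s : Bool) (h : F × G) : TStr F G := ⟨[(1, s), (h, s)], 1⟩

theorem pad_eq (s : Bool) (h : F × G) : uB s 1 h = (pad s h : TStr F G) := by
  simp [uB, pad, List.replicate]

/-- separator word -/
def sw (t : TStr F G) : List Bool := t.lst.map Prod.snd

theorem sw_mul (t u : TStr F G) : sw (t * u) = sw t ++ sw u := by
  obtain ⟨L, h⟩ := t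
  obtain ⟨M, i⟩ := u
  cases M with
  | nil => rw [mul_nil]; simp [sw]
  | cons p r => obtain ⟨k, s⟩ := p; rw [mul_cons]; simp [sw]

theorem sw_one : sw (1 : TStr F G) = [] := rfl

theorem sw_uA (s : Bool) (n : ℕ) (h : F × G) : sw (uA s n h : TStr F G) = List.replicate n s := by
  simp [sw, uA, List.map_replicate]

theorem sw_uB (s : Bool) (n : ℕ) (h : F × G) :
    sw (uB s n h : TStr F G) = List.replicate (n + 1) s := by
  simp [sw, uB, List.map_replicate, List.replicate_succ' (n := n)]

theorem sw_emb (h : F × G) : sw (emb h : TStr F G) = [] := rfl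

/-- entries -/
def eH (t : TStr F G) : List (F × G) := t.lst.map Prod.fst ++ [t.fin]

theorem ext_of_sw_eH {t u : TStr F G} (h1 : sw t = sw u) (h2 : eH t = eH u) : t = u := by
  obtain ⟨L, h⟩ := t
  obtain ⟨M, i⟩ := u
  have hlen : L.length = M.length := by
    have := congrArg List.length h1
    simpa [sw] using this
  have hfst : L.map Prod.fst = M.map Prod.fst ∧ ([h] : List (F × G)) = [i] := by
    apply List.append_inj h2
    simp [hlen]
  have hL : L = M := by
    have e1 : L.map Prod.fst = M.map Prod.fst := hfst.1
    have e2 : L.map Prod.snd = M.map Prod.snd := h1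
    clear h1 h2 hfst hlen
    induction L generalizing M with
    | nil => cases M <;> simp_all
    | cons a L ih =>
      cases M with
      | nil => simp_all
      | cons b M =>
        simp only [List.map_cons, List.cons.injEq] at e1 e2
        have : a = b := Prod.ext e1.1 e2.1
        rw [this, ih M e1.2 e2.2]
  have : h = i := by simpa using hfst.2
  simp_all

/-- left cancellation -/
theorem mul_left_cancel' (t u v : TStr F G) (h : t * u = t * v) : u = v := by
  obtain ⟨L, a⟩ := t
  obtain ⟨M, b⟩ := u
  obtain ⟨N, c⟩ := v
  cases M with
  | nil =>
    cases N with
    | nil =>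
      rw [mul_nil, mul_nil] at h
      injection h with h1 h2
      rw [mul_left_cancel h2]
    | cons p r =>
      obtain ⟨k, s⟩ := p
      rw [mul_nil, mul_cons] at h
      injection h with h1 h2
      have := congrArg List.length h1
      simp at this
  | cons p r =>
    obtain ⟨k, s⟩ := p
    cases N with
    | nil =>
      rw [mul_cons, mul_nil] at h
      injection h with h1 h2
      have := congrArg List.length h1
      simp at this
    | cons q r' =>
      obtain ⟨k', s'⟩ := q
      rw [mul_cons, mul_cons] at h
      injection h with h1 h2
      have h3 := List.append_inj_right h1 rfl
      injection h3 with h4 h5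
      injection h4 with h6 h7
      have : k = k' := mul_left_cancel h6
      simp_all

/-- the list of `t * u` starts with the list of `t` -/
theorem list_mul_prefix (t u : TStr F G) : ∃ w, (t * u).lst = t.lst ++ w := by
  obtain ⟨L, h⟩ := t
  obtain ⟨M, i⟩ := u
  cases M with
  | nil => exact ⟨[], by rw [mul_nil]; simp⟩
  | cons p r => obtain ⟨k, s⟩ := p; exact ⟨(h * k, s) :: r, by rw [mul_cons]⟩

end TStr

end TMon

section Orders

variable {F G : Type*} [Group F] [Group G] {ltF : F → F → Prop} {ltG : G → G → Prop}

/-- lexicographic order on `F × G` -/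
def ltH (ltF : F → F → Prop) (ltG : G → G → Prop) : F × G → F × G → Prop :=
  fun a b => ltF a.1 b.1 ∨ (a.1 = b.1 ∧ ltG a.2 b.2)

/-- order on strings -/
def ltT (ltF : F → F → Prop) (ltG : G → G → Prop) : TStr F G → TStr F G → Prop :=
  fun t u => llex (· < ·) (TStr.sw t) (TStr.sw u) ∨
    (TStr.sw t = TStr.sw u ∧ llex (ltH ltF ltG) (TStr.eH t) (TStr.eH u))

variable (hF : IsBiOrder ltF) (hG : IsBiOrder ltG)
include hF hG

theorem ltH_irrefl (a : F × G) : ¬ ltH ltF ltG a a := by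
  rintro (h | ⟨-, h⟩)
  · exact hF.lt_irrefl _ h
  · exact hG.lt_irrefl _ h

theorem ltH_trans {a b c : F × G} (h1 : ltH ltF ltG a b) (h2 : ltH ltF ltG b c) :
    ltH ltF ltG a c := by
  rcases h1 with h1 | ⟨e1, h1⟩ <;> rcases h2 with h2 | ⟨e2, h2⟩
  · exact Or.inl (hF.lt_trans h1 h2)
  · exact Or.inl (e2 ▸ h1)
  · exact Or.inl (e1 ▸ h2)
  · exact Or.inr ⟨e1.trans e2, hG.lt_trans h1 h2⟩

theorem ltH_trichot (a b : F × G) : ltH ltF ltG a b ∨ a = b ∨ ltH ltF ltG b a := by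
  rcases hF.lt_trichot a.1 b.1 with h | e | h
  · exact Or.inl (Or.inl h)
  · rcases hG.lt_trichot a.2 b.2 with h | e2 | h
    · exact Or.inl (Or.inr ⟨e, h⟩)
    · exact Or.inr (Or.inl (Prod.ext e e2))
    · exact Or.inr (Or.inr (Or.inr ⟨e.symm, h⟩))
  · exact Or.inr (Or.inr (Or.inl h))

theorem ltH_mulr {a b : F × G} (c : F × G) (h : ltH ltF ltG a b) :
    ltH ltF ltG (a * c) (b * c) := by
  rcases h with h | ⟨e, h⟩
  · exact Or.inl (hF.2.1 _ _ _ h)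
  · exact Or.inr ⟨by simp [e], hG.2.1 _ _ _ h⟩

theorem ltH_mull {a b : F × G} (c : F × G) (h : ltH ltF ltG a b) :
    ltH ltF ltG (c * a) (c * b) := by
  rcases h with h | ⟨e, h⟩
  · exact Or.inl (hF.2.2 _ _ _ h)
  · exact Or.inr ⟨by simp [e], hG.2.2 _ _ _ h⟩

theorem ltH_conj {a b : F × G} (c : F × G) (h : ltH ltF ltG a b) :
    ltH ltF ltG (c * a * c⁻¹) (c * b * c⁻¹) :=
  ltH_mulr hF hG _ (ltH_mull hF hG _ h)

theorem ltH_one_lt_cases {a : F × G} (ha : a ≠ 1) :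
    ltH ltF ltG 1 a ∨ ltH ltF ltG 1 a⁻¹ := by
  rcases ltH_trichot hF hG 1 a with h | e | h
  · exact Or.inl h
  · exact absurd e.symm ha
  · right
    have := ltH_mulr hF hG (c := a⁻¹) h
    rw [mul_inv_cancel, one_mul] at this
    exact this

theorem ltH_not_both {a : F × G} (h1 : ltH ltF ltG 1 a) (h2 : ltH ltF ltG 1 a⁻¹) : False := by
  have := ltH_mulr hF hG (c := a) h2
  rw [inv_mul_cancel, one_mul] at this
  exact ltH_irrefl hF hG _ (ltH_trans hF hG h1 this)

theorem ltT_irrefl (t : TStr F G) : ¬ ltT ltF ltG t t := by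
  rintro (h | ⟨-, h⟩)
  · exact llex_irrefl _ (fun a => lt_irrefl a) _ h
  · exact llex_irrefl _ (ltH_irrefl hF hG) _ h

theorem ltT_trans {t u v : TStr F G} (h1 : ltT ltF ltG t u) (h2 : ltT ltF ltG u v) :
    ltT ltF ltG t v := by
  rcases h1 with h1 | ⟨e1, h1⟩ <;> rcases h2 with h2 | ⟨e2, h2⟩
  · exact Or.inl (llex_trans (α := Bool) (· < ·) (fun {a b c} h1 h2 => lt_trans h1 h2) h1 h2)
  · exact Or.inl (e2 ▸ h1)
  · exact Or.inl (e1 ▸ h2)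
  · exact Or.inr ⟨e1.trans e2, llex_trans (ltH ltF ltG) (fun {a b c} h1 h2 => ltH_trans hF hG h1 h2) h1 h2⟩

theorem ltT_trichot (t u : TStr F G) : ltT ltF ltG t u ∨ t = u ∨ ltT ltF ltG u t := by
  rcases llex_trichot (α := Bool) (· < ·) (fun a b => lt_trichotomy a b) (TStr.sw t) (TStr.sw u)
    with h | e | h
  · exact Or.inl (Or.inl h)
  · rcases llex_trichot (ltH ltF ltG) (ltH_trichot hF hG) (TStr.eH t) (TStr.eH u) with h | e2 | h
    · exact Or.inl (Or.inr ⟨e, h⟩)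
    · exact Or.inr (Or.inl (TStr.ext_of_sw_eH e e2))
    · exact Or.inr (Or.inr (Or.inr ⟨e.symm, h⟩))
  · exact Or.inr (Or.inr (Or.inl h))

end Orders

section Transl

variable {F G : Type*} [Group F] [Group G] {ltF : F → F → Prop} {ltG : G → G → Prop}

open TStr

/-- multiply last entry on the right -/
def twR (b : F × G) : List (F × G) → List (F × G)
  | [] => []
  | [x] => [x * b]
  | x :: l => x :: twR b l

/-- multiply first entry on the left and last on the right -/
def tw (a b : F × G) : List (F × G) → List (F × G)
  | [] => []
  | [x] => [a * x * b]
  | x :: l => (a * x) :: twR b l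

theorem twR_nil (b : F × G) : twR b [] = [] := rfl
theorem twR_single (b : F × G) (x : F × G) : twR b [x] = [x * b] := rfl
theorem twR_cons (b : F × G) (x y : F × G) (l : List (F × G)) :
    twR b (x :: y :: l) = x :: twR b (y :: l) := rfl

theorem tw_single (a b x : F × G) : tw a b [x] = [a * x * b] := rfl
theorem tw_cons (a b x y : F × G) (l : List (F × G)) :
    tw a b (x :: y :: l) = (a * x) :: twR b (y :: l) := rfl

theorem twR_append_last (b : F × G) : ∀ (l : List (F × G)) (x : F × G),
    twR b (l ++ [x]) = l ++ [x * b] := by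
  intro l
  induction l with
  | nil => intro x; rfl
  | cons y l ih =>
    intro x
    cases l with
    | nil => rfl
    | cons z l' =>
      simp only [List.cons_append, twR_cons] at ih ⊢
      rw [ih x]

theorem eH_transl (a b : F × G) (t : TStr F G) :
    eH (emb a * t * emb b) = tw a b (eH t) := by
  obtain ⟨L, h⟩ := t
  cases L with
  | nil =>
    rw [emb_def, mul_nil, emb_def, mul_nil]
    show eH ⟨[], a * h * b⟩ = tw a b [h]
    rw [tw_single]; rfl
  | cons p r =>
    obtain ⟨k, s⟩ := p
    rw [emb_def, mul_cons, List.nil_append, emb_def, mul_nil]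
    show (a * k) :: (r.map Prod.fst ++ [h * b]) = tw a b (k :: (r.map Prod.fst ++ [h]))
    cases hr : r.map Prod.fst with
    | nil => simp [hr, tw, twR]
    | cons q l =>
      simp only [List.cons_append, tw_cons]
      rw [show q :: (l ++ [h]) = (q :: l) ++ [h] by simp, twR_append_last]
      simp

variable (hF : IsBiOrder ltF) (hG : IsBiOrder ltG)
include hF hG

theorem llex_twR (b : F × G) : ∀ l m : List (F × G), l.length = m.length →
    llex (ltH ltF ltG) l m → llex (ltH ltF ltG) (twR b l) (twR b m) := by
  intro l
  induction l with
  | nil => intro m hlen h; cases m with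
    | nil => exact absurd h (by simp [llex])
    | cons y m => simp at hlen
  | cons x l ih =>
    intro m hlen h
    cases m with
    | nil => simp at hlen
    | cons y m =>
      cases l with
      | nil =>
        cases m with
        | nil =>
          rcases h with h | ⟨-, h⟩
          · exact Or.inl (ltH_mulr hF hG b h)
          · exact absurd h (by simp [llex])
        | cons z m => simp at hlen
      | cons x2 l2 =>
        cases m with
        | nil => simp at hlen
        | cons y2 m2 =>
          rw [twR_cons, twR_cons]
          rcases h with h | ⟨rfl, h⟩
          · exact Or.inl h
          · refine Or.inr ⟨rfl, ?_⟩
            exact ih (y2 :: m2) (by simpa using hlen) h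

theorem llex_tw (a b : F × G) : ∀ l m : List (F × G), l.length = m.length →
    llex (ltH ltF ltG) l m → llex (ltH ltF ltG) (tw a b l) (tw a b m) := by
  intro l m hlen h
  cases l with
  | nil => cases m with
    | nil => exact absurd h (by simp [llex])
    | cons y m => simp at hlen
  | cons x l =>
    cases m with
    | nil => simp at hlen
    | cons y m =>
      cases l with
      | nil =>
        cases m with
        | nil =>
          rcases h with h | ⟨-, h⟩
          · exact Or.inl (ltH_mulr hF hG b (ltH_mull hF hG a h))
          · exact absurd h (by simp [llex])
        | cons z m => simp at hlen
      | cons x2 l2 =>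
        cases m with
        | nil => simp at hlen
        | cons y2 m2 =>
          rw [tw_cons, tw_cons]
          rcases h with h | ⟨rfl, h⟩
          · exact Or.inl (ltH_mull hF hG a h)
          · exact Or.inr ⟨rfl, llex_twR hF hG b _ _ (by simpa using hlen) h⟩

theorem sw_sandwich (a b : F × G) (t : TStr F G) :
    TStr.sw (emb a * t * emb b) = TStr.sw t := by
  rw [sw_mul, sw_mul, sw_emb]
  simp [TStr.sw, emb_def]

theorem ltT_transl (a b : F × G) {t u : TStr F G} (h : ltT ltF ltG t u) :
    ltT ltF ltG (emb a * t * emb b) (emb a * u * emb b) := by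
  rcases h with h | ⟨e, h⟩
  · exact Or.inl (by rw [sw_sandwich hF hG, sw_sandwich hF hG]; exact h)
  · refine Or.inr ⟨by rw [sw_sandwich hF hG, sw_sandwich hF hG]; exact e, ?_⟩
    rw [eH_transl, eH_transl]
    apply llex_tw hF hG a b _ _ _ h
    have : t.lst.length = u.lst.length := by
      have := congrArg List.length e
      simpa [TStr.sw] using this
    simp [TStr.eH, this]

theorem ltT_transl_inj (a b : F × G) : Function.Injective
    (fun t : TStr F G => emb a * t * emb b) := by
  intro t u h
  have h : emb a * t * emb b = emb a * u * emb b := h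
  rcases ltT_trichot hF hG t u with hlt | e | hlt
  · have := ltT_transl hF hG a b hlt
    rw [h] at this
    exact absurd this (ltT_irrefl hF hG _)
  · exact e
  · have := ltT_transl hF hG a b hlt
    rw [h] at this
    exact absurd this (ltT_irrefl hF hG _)

omit hF hG

/-- positivity of a leading coefficient -/
def posA (ltF : F → F → Prop) (ltG : G → G → Prop) (x : MonoidAlgebra ℤ (TStr F G)) : Prop :=
  ∃ t, 0 < x t ∧ ∀ u, ltT ltF ltG t u → x u = 0

include hF hG

theorem exists_ltT_max (s : Finset (TStr F G)) :
    s.Nonempty → ∃ t ∈ s, ∀ u ∈ s, ¬ ltT ltF ltG t u := by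
  classical
  refine Finset.cons_induction_on s ?_ ?_
  · rintro ⟨x, hx⟩; simp at hx
  · intro a s ha ih _
    rcases s.eq_empty_or_nonempty with rfl | hs
    · refine ⟨a, by simp, ?_⟩
      intro u hu hau
      simp only [Finset.cons_empty, Finset.mem_singleton] at hu
      subst hu
      exact ltT_irrefl hF hG u hau
    · obtain ⟨t, ht, hmax⟩ := ih hs
      by_cases hlt : ltT ltF ltG t a
      · refine ⟨a, by simp, ?_⟩
        intro u hu hau
        rcases Finset.mem_cons.mp hu with rfl | hu
        · exact ltT_irrefl hF hG u hau
        · exact hmax u hu (ltT_trans hF hG hlt hau)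
      · refine ⟨t, by simp [ht], ?_⟩
        intro u hu htu
        rcases Finset.mem_cons.mp hu with rfl | hu
        · exact hlt htu
        · exact hmax u hu htu

theorem posA_tri {x : MonoidAlgebra ℤ (TStr F G)} (hx : x ≠ 0) :
    posA ltF ltG x ∨ posA ltF ltG (-x) := by
  obtain ⟨t, ht, hmax⟩ := exists_ltT_max hF hG x.coeff.support (Finsupp.support_nonempty_iff.mpr (MonoidAlgebra.coeff_eq_zero.not.mpr hx))
  have hxt : x t ≠ 0 := Finsupp.mem_support_iff.mp ht
  rcases lt_or_gt_of_ne hxt with hneg | hpos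
  · right
    refine ⟨t, by rw [MonoidAlgebra.neg_apply]; omega, ?_⟩
    intro u hu
    by_contra hne
    rw [MonoidAlgebra.neg_apply] at hne
    have : x u ≠ 0 := by omega
    exact hmax u (Finsupp.mem_support_iff.mpr this) hu
  · left
    refine ⟨t, hpos, ?_⟩
    intro u hu
    by_contra hne
    exact hmax u (Finsupp.mem_support_iff.mpr hne) hu

theorem posA_not_both {x : MonoidAlgebra ℤ (TStr F G)} :
    posA ltF ltG x → posA ltF ltG (-x) → False := by
  rintro ⟨t, ht, hmax⟩ ⟨t', ht', hmax'⟩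
  rcases ltT_trichot hF hG t t' with h | rfl | h
  · have := hmax t' h
    rw [MonoidAlgebra.neg_apply] at ht'
    omega
  · rw [MonoidAlgebra.neg_apply] at ht'
    omega
  · have := hmax' t h
    rw [MonoidAlgebra.neg_apply] at this
    omega

theorem posA_add {x y : MonoidAlgebra ℤ (TStr F G)} (hx : posA ltF ltG x)
    (hy : posA ltF ltG y) : posA ltF ltG (x + y) := by
  obtain ⟨t, ht, hmax⟩ := hx
  obtain ⟨t', ht', hmax'⟩ := hy
  rcases ltT_trichot hF hG t t' with h | rfl | h
  · refine ⟨t', ?_, ?_⟩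
    · rw [MonoidAlgebra.coeff_add, Finsupp.add_apply, hmax t' h]; omega
    · intro u hu
      rw [MonoidAlgebra.coeff_add, Finsupp.add_apply, hmax u (ltT_trans hF hG h hu), hmax' u hu, add_zero]
  · refine ⟨t, ?_, ?_⟩
    · rw [MonoidAlgebra.coeff_add, Finsupp.add_apply]; omega
    · intro u hu
      rw [MonoidAlgebra.coeff_add, Finsupp.add_apply, hmax u hu, hmax' u hu, add_zero]
  · refine ⟨t, ?_, ?_⟩
    · rw [MonoidAlgebra.coeff_add, Finsupp.add_apply, hmax' t h]; omega
    · intro u hu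
      rw [MonoidAlgebra.coeff_add, Finsupp.add_apply, hmax u hu, hmax' u (ltT_trans hF hG h hu), add_zero]

omit hF hG

theorem sandwich_eq (a b : F × G) (x : MonoidAlgebra ℤ (TStr F G)) :
    MonoidAlgebra.single (emb a) (1 : ℤ) * x * MonoidAlgebra.single (emb b) 1 =
      MonoidAlgebra.mapDomain (fun t => emb a * t * emb b) x := by
  induction x using MonoidAlgebra.induction_linear with
  | zero => simp
  | add f g hf hg => rw [mul_add, add_mul, hf, hg, MonoidAlgebra.mapDomain_add]
  | single t c =>
    rw [MonoidAlgebra.single_mul_single, MonoidAlgebra.single_mul_single,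
      MonoidAlgebra.mapDomain_single]
    simp [mul_assoc]

include hF hG

theorem posA_transl (a b : F × G) {x : MonoidAlgebra ℤ (TStr F G)} (hx : posA ltF ltG x) :
    posA ltF ltG (MonoidAlgebra.single (emb a) (1 : ℤ) * x * MonoidAlgebra.single (emb b) 1) := by
  rw [sandwich_eq]
  obtain ⟨t, ht, hmax⟩ := hx
  refine ⟨emb a * t * emb b, ?_, ?_⟩
  · rw [MonoidAlgebra.mapDomain, MonoidAlgebra.coeff_ofCoeff, Finsupp.mapDomain_apply (ltT_transl_inj hF hG a b)]
    exact ht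
  · intro u hu
    by_cases hmem : u ∈ Set.range (fun t : TStr F G => emb a * t * emb b)
    · obtain ⟨v, rfl⟩ := hmem
      rw [MonoidAlgebra.mapDomain, MonoidAlgebra.coeff_ofCoeff, Finsupp.mapDomain_apply (ltT_transl_inj hF hG a b)]
      apply hmax
      rcases ltT_trichot hF hG t v with h | rfl | h
      · exact h
      · exact absurd hu (ltT_irrefl hF hG _)
      · exact absurd (ltT_trans hF hG (ltT_transl hF hG a b h) hu) (ltT_irrefl hF hG _)
    · exact Finsupp.mapDomain_notin_range _ _ hmem

end Transl

section Magnus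

variable {F G : Type*} [Group F] [Group G]

open TStr PowerSeries

/-- abbreviation for the coefficient ring -/
abbrev AMA (F G : Type*) := MonoidAlgebra ℤ (TStr F G)

/-- the power series ring -/
abbrev RH (F G : Type*) [Group F] [Group G] : Type _ := PowerSeries (AMA F G)

/-- degree-one separator series -/
noncomputable def YS (s : Bool) : RH F G :=
  PowerSeries.X * PowerSeries.C (R := AMA F G) (MonoidAlgebra.single (sep s) 1)

/-- `(1 + YS s)⁻¹` -/
noncomputable def VS (s : Bool) : RH F G :=
  PowerSeries.mk fun n => MonoidAlgebra.single ((sep s : TStr F G) ^ n) ((-1) ^ n)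

theorem coeff_YS_mul (s : Bool) (φ : RH F G) (n : ℕ) :
    (PowerSeries.coeff (n + 1)) (YS s * φ) =
      MonoidAlgebra.single (sep s) 1 * (PowerSeries.coeff n) φ := by
  rw [YS, mul_assoc, coeff_succ_X_mul, coeff_C_mul]

theorem coeff_zero_YS_mul (s : Bool) (φ : RH F G) :
    (PowerSeries.coeff 0) (YS s * φ) = 0 := by
  rw [coeff_zero_eq_constantCoeff_apply, map_mul, YS, map_mul, constantCoeff_X, zero_mul, zero_mul]

theorem coeff_mul_YS (s : Bool) (φ : RH F G) (n : ℕ) :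
    (PowerSeries.coeff (n + 1)) (φ * YS s) =
      (PowerSeries.coeff n) φ * MonoidAlgebra.single (sep s) 1 := by
  rw [YS, ← (commute_X (PowerSeries.C (R := AMA F G) (MonoidAlgebra.single (sep s) 1))).eq,
    ← mul_assoc, coeff_succ_mul_X, coeff_mul_C]

theorem coeff_zero_mul_YS (s : Bool) (φ : RH F G) :
    (PowerSeries.coeff 0) (φ * YS s) = 0 := by
  rw [coeff_zero_eq_constantCoeff_apply, map_mul, YS, map_mul, constantCoeff_X, zero_mul, mul_zero]

theorem one_add_YS_mul_VS (s : Bool) : (1 + YS s) * VS s = (1 : RH F G) := by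
  ext n
  rw [add_mul, one_mul, map_add]
  cases n with
  | zero =>
    rw [coeff_zero_YS_mul, add_zero, coeff_one, if_pos rfl, VS, coeff_mk]
    simp [MonoidAlgebra.one_def]
  | succ n =>
    rw [coeff_YS_mul, coeff_one, if_neg (Nat.succ_ne_zero n), VS, coeff_mk, coeff_mk,
      MonoidAlgebra.single_mul_single]
    rw [← pow_succ']
    rw [← MonoidAlgebra.single_add]
    simp [pow_succ]

theorem VS_mul_one_add_YS (s : Bool) : VS s * (1 + YS s) = (1 : RH F G) := by
  ext n
  rw [mul_add, mul_one, map_add]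
  cases n with
  | zero =>
    rw [coeff_zero_mul_YS, add_zero, coeff_one, if_pos rfl, VS, coeff_mk]
    simp [MonoidAlgebra.one_def]
  | succ n =>
    rw [coeff_mul_YS, coeff_one, if_neg (Nat.succ_ne_zero n), VS, coeff_mk, coeff_mk,
      MonoidAlgebra.single_mul_single]
    rw [← pow_succ]
    rw [← MonoidAlgebra.single_add]
    simp [pow_succ]

/-- the unit `1 + YS s` -/
noncomputable def unitU (s : Bool) : (RH F G)ˣ :=
  ⟨1 + YS s, VS s, one_add_YS_mul_VS s, VS_mul_one_add_YS s⟩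

/-- the constant unit attached to `h : F × G` -/
noncomputable def unitC (h : F × G) : (RH F G)ˣ where
  val := PowerSeries.C (R := AMA F G) (MonoidAlgebra.single (emb h) 1)
  inv := PowerSeries.C (R := AMA F G) (MonoidAlgebra.single (emb h⁻¹) 1)
  val_inv := by
    rw [← map_mul, MonoidAlgebra.single_mul_single, ← map_mul, mul_inv_cancel, one_mul,
      map_one emb, ← MonoidAlgebra.one_def, map_one]
  inv_val := by
    rw [← map_mul, MonoidAlgebra.single_mul_single, ← map_mul, inv_mul_cancel, one_mul,
      map_one emb, ← MonoidAlgebra.one_def, map_one]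

theorem unitC_mul (h h' : F × G) : (unitC h : (RH F G)ˣ) * unitC h' = unitC (h * h') := by
  refine Units.ext ?_
  rw [Units.val_mul]
  show (PowerSeries.C (R := AMA F G)) (MonoidAlgebra.single (emb h) 1) *
      (PowerSeries.C (R := AMA F G)) (MonoidAlgebra.single (emb h') 1) =
    (PowerSeries.C (R := AMA F G)) (MonoidAlgebra.single (emb (h * h')) 1)
  rw [← map_mul, MonoidAlgebra.single_mul_single, one_mul, ← map_mul emb h h']

/-- the Magnus morphisms -/
noncomputable def homF : F →* (RH F G)ˣ :=
  MonoidHom.mk' (fun f => (unitU true)⁻¹ * unitC (f, 1) * unitU true) (by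
    intro a b
    have : unitC ((a : F), (1 : G)) * unitC (b, 1) = unitC (a * b, 1) := by
      rw [unitC_mul]; congr 1; simp
    rw [← this]
    group)

noncomputable def homG : G →* (RH F G)ˣ :=
  MonoidHom.mk' (fun g => (unitU false)⁻¹ * unitC (1, g) * unitU false) (by
    intro a b
    have : unitC ((1 : F), (a : G)) * unitC (1, b) = unitC (1, a * b) := by
      rw [unitC_mul]; congr 1; simp
    rw [← this]
    group)

/-- the Magnus embedding of the free product -/
noncomputable def PhiU : Monoid.Coprod F G →* (RH F G)ˣ :=
  Monoid.Coprod.lift homF homG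

/-- the underlying series -/
noncomputable def Phi (w : Monoid.Coprod F G) : RH F G := (PhiU w : RH F G)

theorem Phi_mul (w w' : Monoid.Coprod F G) : Phi (w * w') = Phi w * Phi w' := by
  rw [Phi, Phi, Phi, map_mul, Units.val_mul]

theorem Phi_one : Phi (1 : Monoid.Coprod F G) = 1 := by
  rw [Phi, map_one, Units.val_one]

/-- series of a single letter -/
noncomputable def letterSeries (s : Bool) (h : F × G) : RH F G :=
  VS s * PowerSeries.C (R := AMA F G) (MonoidAlgebra.single (emb h) 1) * (1 + YS s)

theorem Phi_inl (f : F) : Phi (Monoid.Coprod.inl f : Monoid.Coprod F G)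
    = letterSeries true (f, 1) := by
  rw [Phi, PhiU, Monoid.Coprod.lift_apply_inl]
  rfl

theorem Phi_inr (g : G) : Phi (Monoid.Coprod.inr g : Monoid.Coprod F G)
    = letterSeries false (1, g) := by
  rw [Phi, PhiU, Monoid.Coprod.lift_apply_inr]
  rfl

theorem coeff_VC (s : Bool) (h : F × G) (n : ℕ) :
    (PowerSeries.coeff n) (VS s * PowerSeries.C (R := AMA F G) (MonoidAlgebra.single (emb h) 1))
      = MonoidAlgebra.single (uA s n h) ((-1) ^ n) := by
  rw [coeff_mul_C, VS, coeff_mk, MonoidAlgebra.single_mul_single, mul_one, uA_eq]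

theorem coeff_letterSeries_zero (s : Bool) (h : F × G) :
    (PowerSeries.coeff 0) (letterSeries s h : RH F G)
      = MonoidAlgebra.single (emb h) 1 := by
  rw [letterSeries, mul_add, mul_one, map_add, coeff_zero_mul_YS, add_zero, coeff_VC]
  rw [show uA s 0 h = emb h from rfl]
  norm_num

theorem coeff_letterSeries_succ (s : Bool) (h : F × G) (n : ℕ) :
    (PowerSeries.coeff (n + 1)) (letterSeries s h : RH F G)
      = MonoidAlgebra.single (uA s (n + 1) h) ((-1) ^ (n + 1))
        + MonoidAlgebra.single (uB s n h) ((-1) ^ n) := by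
  rw [letterSeries, mul_add, mul_one, map_add, coeff_mul_YS, coeff_VC, coeff_VC,
    MonoidAlgebra.single_mul_single, mul_one, uB_eq]

theorem coeff_letterSeries_sw (s : Bool) (h : F × G) (n : ℕ) (t : TStr F G)
    (ht : (PowerSeries.coeff n) (letterSeries s h : RH F G) t ≠ 0) :
    TStr.sw t = List.replicate n s := by
  cases n with
  | zero =>
    rw [coeff_letterSeries_zero] at ht
    have : t = emb h := by
      by_contra hne
      exact ht (Finsupp.single_apply_eq_zero.mpr (fun he => absurd he hne))
    rw [this, sw_emb]
    rfl
  | succ n =>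
    rw [coeff_letterSeries_succ] at ht
    rw [MonoidAlgebra.coeff_add, Finsupp.add_apply] at ht
    by_cases h1 : t = uA s (n + 1) h
    · rw [h1, sw_uA]
    by_cases h2 : t = uB s n h
    · rw [h2, sw_uB]
    have e1 : (MonoidAlgebra.single (uA s (n + 1) h) ((-1) ^ (n + 1) : ℤ)) t = 0 :=
      Finsupp.single_apply_eq_zero.mpr (fun he => absurd he h1)
    have e2 : (MonoidAlgebra.single (uB s n h) ((-1) ^ n : ℤ)) t = 0 :=
      Finsupp.single_apply_eq_zero.mpr (fun he => absurd he h2)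
    rw [e1, e2, add_zero] at ht
    exact absurd rfl ht

theorem cc_letterSeries (s : Bool) (h : F × G) :
    constantCoeff (R := AMA F G) (letterSeries s h : RH F G) = MonoidAlgebra.single (emb h) 1 := by
  rw [← coeff_zero_eq_constantCoeff_apply, coeff_letterSeries_zero]

theorem ccPhi (w : Monoid.Coprod F G) :
    constantCoeff (R := AMA F G) (Phi w)
      = MonoidAlgebra.single (emb (canonicalMap F G w)) 1 := by
  induction w using Monoid.Coprod.induction_on with
  | inl f =>
    rw [Phi_inl, cc_letterSeries]
    congr 1
  | inr g =>
    rw [Phi_inr, cc_letterSeries]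
    congr 1
  | mul x y ihx ihy =>
    rw [Phi_mul, map_mul, ihx, ihy, MonoidAlgebra.single_mul_single, one_mul,
      ← map_mul emb, ← map_mul (canonicalMap F G)]

end Magnus

section Words

variable {F G : Type*} [Group F] [Group G]

open TStr PowerSeries

/-- type of a letter -/
def sB : F ⊕ G → Bool := Sum.isLeft

/-- image of a letter in `F × G` -/
def hOf : F ⊕ G → F × G := Sum.elim (fun f => (f, 1)) (fun g => (1, g))

/-- letter as an element of the free product -/
def iGam : F ⊕ G → Monoid.Coprod F G := Sum.elim Monoid.Coprod.inl Monoid.Coprod.inr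

/-- product of a word -/
def prodG (l : List (F ⊕ G)) : Monoid.Coprod F G := (l.map iGam).prod

/-- reduced word -/
def RedWord (l : List (F ⊕ G)) : Prop :=
  List.Chain' (fun a b => sB a ≠ sB b) l ∧ ∀ L ∈ l, hOf L ≠ 1

/-- target string of a word -/
def tstar (l : List (F ⊕ G)) : TStr F G := (l.map (fun L => pad (sB L) (hOf L))).prod

theorem prodG_nil : prodG ([] : List (F ⊕ G)) = 1 := rfl

theorem prodG_cons (L : F ⊕ G) (l : List (F ⊕ G)) : prodG (L :: l) = iGam L * prodG l := by
  rw [prodG, List.map_cons, List.prod_cons, prodG]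

theorem tstar_nil : tstar ([] : List (F ⊕ G)) = 1 := rfl

theorem tstar_cons (L : F ⊕ G) (l : List (F ⊕ G)) :
    tstar (L :: l) = pad (sB L) (hOf L) * tstar l := by
  rw [tstar, List.map_cons, List.prod_cons, tstar]

theorem Phi_letter (L : F ⊕ G) : Phi (iGam L) = letterSeries (sB L) (hOf L) := by
  cases L with
  | inl f => exact Phi_inl f
  | inr g => exact Phi_inr g

theorem sw_pad (s : Bool) (h : F × G) : TStr.sw (pad s h : TStr F G) = [s, s] := rfl

theorem sw_tstar (l : List (F ⊕ G)) : TStr.sw (tstar l : TStr F G) = wsq (l.map sB) := by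
  induction l with
  | nil => rfl
  | cons L l ih =>
    rw [tstar_cons, sw_mul, sw_pad, ih, List.map_cons, wsq_cons]
    rfl

theorem padMul_lst (s : Bool) (h : F × G) (t : TStr F G) :
    ∃ rest, (pad s h * t).lst = (1, s) :: (h, s) :: rest := by
  obtain ⟨L, i⟩ := t
  cases L with
  | nil => exact ⟨[], by rw [pad, mul_nil]⟩
  | cons p r =>
    obtain ⟨k, u⟩ := p
    refine ⟨(1 * k, u) :: r, ?_⟩
    rw [pad, mul_cons]
    rfl

/-- extraction of a factorization from a nonzero product coefficient -/
theorem exists_factor {x y : AMA F G} {t : TStr F G} (h : (x * y) t ≠ 0) :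
    ∃ u ∈ x.coeff.support, ∃ v ∈ y.coeff.support, u * v = t := by
  classical
  have ht : t ∈ (x * y).coeff.support := Finsupp.mem_support_iff.mpr h
  have := MonoidAlgebra.support_coeff_mul_subset x y ht
  exact Finset.mem_mul.mp this

theorem coeff_letterSeries_support (s : Bool) (h : F × G) (n : ℕ) (t : TStr F G)
    (ht : (PowerSeries.coeff n) (letterSeries s h : RH F G) t ≠ 0) :
    t = uA s n h ∨ ∃ n', n = n' + 1 ∧ t = uB s n' h := by
  cases n with
  | zero =>
    left
    rw [coeff_letterSeries_zero] at ht
    by_contra hne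
    exact ht (Finsupp.single_apply_eq_zero.mpr (fun he => absurd he hne))
  | succ n =>
    rw [coeff_letterSeries_succ, MonoidAlgebra.coeff_add, Finsupp.add_apply] at ht
    by_cases h1 : t = uA s (n + 1) h
    · exact Or.inl h1
    by_cases h2 : t = uB s n h
    · exact Or.inr ⟨n, rfl, h2⟩
    have e1 : (MonoidAlgebra.single (uA s (n + 1) h) ((-1) ^ (n + 1) : ℤ)) t = 0 :=
      Finsupp.single_apply_eq_zero.mpr (fun he => absurd he h1)
    have e2 : (MonoidAlgebra.single (uB s n h) ((-1) ^ n : ℤ)) t = 0 :=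
      Finsupp.single_apply_eq_zero.mpr (fun he => absurd he h2)
    rw [e1, e2, add_zero] at ht
    exact absurd rfl ht

theorem uA_lst (s : Bool) (n : ℕ) (h : F × G) :
    (uA s n h : TStr F G).lst = List.replicate n (1, s) := rfl

theorem uB_lst (s : Bool) (n : ℕ) (h : F × G) :
    (uB s n h : TStr F G).lst = List.replicate n (1, s) ++ [(h, s)] := rfl

theorem mismatch2 {s : Bool} {h : F × G} (h0 : h ≠ 1) {u v t' : TStr F G}
    (hlst : ∃ L0, u.lst = ((1 : F × G), s) :: ((1 : F × G), s) :: L0)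
    (huv : u * v = pad s h * t') : False := by
  obtain ⟨L0, hL⟩ := hlst
  obtain ⟨w, hw⟩ := list_mul_prefix u v
  obtain ⟨rest, hrest⟩ := padMul_lst s h t'
  rw [huv, hrest, hL] at hw
  simp only [List.cons_append, List.cons.injEq] at hw
  have : h = 1 := by
    have := hw.2.1
    injection this
  exact h0 this

theorem mismatch1 {s : Bool} {h : F × G} (h0 : h ≠ 1) {u v t' : TStr F G}
    (hlst : ∃ L0, u.lst = (h, s) :: L0)
    (huv : u * v = pad s h * t') : False := by
  obtain ⟨L0, hL⟩ := hlst
  obtain ⟨w, hw⟩ := list_mul_prefix u v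
  obtain ⟨rest, hrest⟩ := padMul_lst s h t'
  rw [huv, hrest, hL] at hw
  simp only [List.cons_append, List.cons.injEq] at hw
  have : h = 1 := by
    have := hw.1
    injection this with h1 h2
    exact h1.symm
  exact h0 this

theorem key (l : List (F ⊕ G)) (hred : RedWord l) :
    ((PowerSeries.coeff (R := AMA F G) (2 * l.length)) (Phi (prodG l)) (tstar l) = (-1) ^ l.length)
    ∧ ∀ n t, (PowerSeries.coeff (R := AMA F G) n) (Phi (prodG l)) t ≠ 0 →
        patt (l.map sB) n (TStr.sw t) := by
  induction l with
  | nil =>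
    constructor
    · rw [prodG_nil, Phi_one]
      rw [show (2 * ([] : List (F ⊕ G)).length) = 0 by simp, PowerSeries.coeff_one, if_pos rfl]
      rw [tstar_nil, MonoidAlgebra.one_def, List.length_nil, pow_zero]
      exact Finsupp.single_eq_same
    · intro n t ht
      rw [prodG_nil, Phi_one, PowerSeries.coeff_one] at ht
      by_cases hn : n = 0
      · subst hn
        rw [if_pos rfl, MonoidAlgebra.one_def] at ht
        have : t = 1 := by
          by_contra hne
          exact ht (Finsupp.single_apply_eq_zero.mpr (fun he => absurd he hne))
        subst this
        exact ⟨rfl, rfl⟩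
      · rw [if_neg hn] at ht
        exact absurd rfl ht
  | cons L l ih =>
    obtain ⟨hch, hnt⟩ := hred
    have hred' : RedWord l := ⟨hch.tail, fun x hx => hnt x (List.mem_cons_of_mem _ hx)⟩
    obtain ⟨IHa, IHc⟩ := ih hred'
    have h0 : hOf L ≠ 1 := hnt L (List.mem_cons_self)
    have hPhi : Phi (prodG (L :: l)) = letterSeries (sB L) (hOf L) * Phi (prodG l) := by
      rw [prodG_cons, Phi_mul, Phi_letter]
    have hts : tstar (L :: l) = pad (sB L) (hOf L) * tstar l := tstar_cons L l
    have hchain : List.Chain' (· ≠ ·) (sB L :: l.map sB) :=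
      (List.isChain_map sB).mpr hch
    have hswt : TStr.sw (tstar (L :: l) : TStr F G)
        = (sB L) :: (sB L) :: wsq (l.map sB) := by
      rw [sw_tstar]; rfl
    -- vanishing of all cross terms except the main one
    have hzero : ∀ p : ℕ × ℕ, p ∈ Finset.HasAntidiagonal.antidiagonal (2 * (L :: l).length) →
        p ≠ ((2 : ℕ), 2 * l.length) →
        ((PowerSeries.coeff (R := AMA F G) p.1) (letterSeries (sB L) (hOf L)) *
          (PowerSeries.coeff (R := AMA F G) p.2) (Phi (prodG l))) (tstar (L :: l)) = 0 := by
      rintro ⟨j, k⟩ hjk hne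
      have hjk : j + k = 2 * (L :: l).length := Finset.HasAntidiagonal.mem_antidiagonal.mp hjk
      by_contra hv
      obtain ⟨u, hu, v, hvmem, huv⟩ := exists_factor hv
      have hu' := Finsupp.mem_support_iff.mp hu
      have hv' := Finsupp.mem_support_iff.mp hvmem
      have hswu : TStr.sw u = List.replicate j (sB L) := coeff_letterSeries_sw _ _ _ _ hu'
      have hpatt : patt (l.map sB) k (TStr.sw v) := IHc k v hv'
      have hruns : runs (TStr.sw v) ≤ l.length := by
        have := runs_patt_le (l.map sB) k (TStr.sw v) hpatt
        simpa using this
      have hsw_split : List.replicate j (sB L) ++ TStr.sw v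
          = (sB L) :: (sB L) :: wsq (l.map sB) := by
        rw [← hswu, ← sw_mul, huv, hswt]
      match j, hjk with
      | 0, hjk =>
        rw [List.replicate_zero, List.nil_append] at hsw_split
        have := (runs_cons_wsq (l.map sB) (sB L) hchain).2
        rw [hsw_split] at hruns
        simp only [List.length_map] at this
        omega
      | 1, hjk =>
        rw [List.replicate_one, List.singleton_append] at hsw_split
        have hsv : TStr.sw v = (sB L) :: wsq (l.map sB) := by
          injection hsw_split with h1 h2
        have := (runs_cons_wsq (l.map sB) (sB L) hchain).1
        rw [hsv] at hruns
        simp only [List.length_map] at this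
        omega
      | (j' + 2), hjk =>
        rcases coeff_letterSeries_support _ _ _ _ hu' with rfl | ⟨n', hn', rfl⟩
        · refine mismatch2 h0 ?_ (huv.trans hts)
          refine ⟨List.replicate j' ((1 : F × G), sB L), ?_⟩
          rw [uA_lst]
          simp [List.replicate_succ]
        · have hn'' : n' = j' + 1 := by omega
          subst hn''
          match j' with
          | 0 =>
            exact hne (by
              have : k = 2 * l.length := by simp at hjk; omega
              simp [this])
          | (j'' + 1) =>
            refine mismatch2 h0 ?_ (huv.trans hts)
            refine ⟨List.replicate j'' ((1 : F × G), sB L) ++ [(hOf L, sB L)], ?_⟩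
            rw [uB_lst]
            simp [List.replicate_succ]
    constructor
    · -- main coefficient
      rw [hPhi, PowerSeries.coeff_mul, MonoidAlgebra.coeff_sum, Finset.sum_apply']
      rw [Finset.sum_eq_single ((2 : ℕ), 2 * l.length) hzero (by
        intro hmem
        exact absurd (Finset.HasAntidiagonal.mem_antidiagonal.mpr (by simp; omega)) hmem)]
      rw [coeff_letterSeries_succ, add_mul, MonoidAlgebra.coeff_add, Finsupp.add_apply]
      have hterm1 : ((MonoidAlgebra.single (uA (sB L) (1 + 1) (hOf L)) ((-1 : ℤ) ^ (1 + 1))) *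
          (PowerSeries.coeff (R := AMA F G) (2 * l.length)) (Phi (prodG l))) (tstar (L :: l)) = 0 := by
        by_contra hv
        obtain ⟨u, hu, v, hvmem, huv⟩ := exists_factor hv
        have := Finsupp.support_single_subset hu
        rw [Finset.mem_singleton] at this
        subst this
        refine mismatch2 h0 ?_ (huv.trans hts)
        exact ⟨[], by rw [uA_lst]; simp [List.replicate_succ]⟩
      rw [hterm1, zero_add]
      have hcanc : ∀ a : TStr F G, pad (sB L) (hOf L) * a = pad (sB L) (hOf L) * tstar l
          ↔ a = tstar l := by
        intro a
        constructor
        · exact fun hh => mul_left_cancel' _ _ _ hh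
        · rintro rfl; rfl
      rw [pad_eq, hts]
      rw [MonoidAlgebra.coeff_single_mul_eq_mul_coeff _ (fun a _ => hcanc a)]
      rw [IHa]
      rw [List.length_cons, pow_succ]
      ring
    · -- pattern control
      intro n t ht
      rw [hPhi, PowerSeries.coeff_mul, MonoidAlgebra.coeff_sum, Finset.sum_apply'] at ht
      obtain ⟨p, hp, hpne⟩ := Finset.exists_ne_zero_of_sum_ne_zero ht
      obtain ⟨u, hu, v, hvmem, huv⟩ := exists_factor hpne
      have hu' := Finsupp.mem_support_iff.mp hu
      have hv' := Finsupp.mem_support_iff.mp hvmem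
      refine ⟨p.1, p.2, TStr.sw v, Finset.HasAntidiagonal.mem_antidiagonal.mp hp, IHc p.2 v hv', ?_⟩
      rw [← huv, sw_mul, coeff_letterSeries_sw _ _ _ _ hu']

theorem iGam_one {L : F ⊕ G} (hL : hOf L = 1) : iGam L = 1 := by
  cases L with
  | inl f =>
    have : f = 1 := by
      have := congrArg Prod.fst hL
      simpa [hOf] using this
    rw [iGam, this]
    simp
  | inr g =>
    have : g = 1 := by
      have := congrArg Prod.snd hL
      simpa [hOf] using this
    rw [iGam, this]
    simp

theorem prepend (L : F ⊕ G) (l : List (F ⊕ G)) (hl : RedWord l) :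
    ∃ l', RedWord l' ∧ prodG l' = iGam L * prodG l := by
  by_cases hL : hOf L = 1
  · exact ⟨l, hl, by rw [iGam_one hL, one_mul]⟩
  · cases l with
    | nil =>
      refine ⟨[L], ⟨List.isChain_singleton L, ?_⟩, by rw [prodG_cons]⟩
      intro x hx
      rw [List.mem_singleton] at hx
      subst hx
      exact hL
    | cons L₁ rest =>
      by_cases hsb : sB L = sB L₁
      · have hcomb : ∀ (c : F ⊕ G), hOf c ≠ 1 → sB c = sB L₁ →
            iGam c = iGam L * iGam L₁ →
            ∃ l', RedWord l' ∧ prodG l' = iGam L * prodG (L₁ :: rest) := by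
          intro c hc hcsb hprod
          refine ⟨c :: rest, ⟨?_, ?_⟩, ?_⟩
          · apply List.isChain_cons.mpr
            refine ⟨?_, hl.1.tail⟩
            intro y hy
            have := (List.isChain_cons.mp hl.1).1 y hy
            rw [hcsb]
            exact this
          · intro x hx
            rcases List.mem_cons.mp hx with rfl | hx
            · exact hc
            · exact hl.2 x (List.mem_cons_of_mem _ hx)
          · rw [prodG_cons, prodG_cons, hprod, mul_assoc]
        have htriv : ∀ (hone : iGam L * iGam L₁ = 1),
            ∃ l', RedWord l' ∧ prodG l' = iGam L * prodG (L₁ :: rest) := by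
          intro hone
          refine ⟨rest, ⟨hl.1.tail, fun x hx => hl.2 x (List.mem_cons_of_mem _ hx)⟩, ?_⟩
          rw [prodG_cons, ← mul_assoc, hone, one_mul]
        cases L with
        | inl f =>
          cases L₁ with
          | inr g₁ => exact absurd hsb (by simp [sB])
          | inl f₁ =>
            by_cases hc : f * f₁ = 1
            · apply htriv
              simp only [iGam, Sum.elim_inl]
              rw [← map_mul, hc, map_one]
            · apply hcomb (Sum.inl (f * f₁))
              · intro hh
                have : f * f₁ = 1 := by
                  have := congrArg Prod.fst hh
                  simpa [hOf] using this
                exact hc this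
              · rfl
              · simp only [iGam, Sum.elim_inl]
                rw [map_mul]
        | inr g =>
          cases L₁ with
          | inl f₁ => exact absurd hsb (by simp [sB])
          | inr g₁ =>
            by_cases hc : g * g₁ = 1
            · apply htriv
              simp only [iGam, Sum.elim_inr]
              rw [← map_mul, hc, map_one]
            · apply hcomb (Sum.inr (g * g₁))
              · intro hh
                have : g * g₁ = 1 := by
                  have := congrArg Prod.snd hh
                  simpa [hOf] using this
                exact hc this
              · rfl
              · simp only [iGam, Sum.elim_inr]
                rw [map_mul]
      · refine ⟨L :: L₁ :: rest, ⟨List.isChain_cons_cons.mpr ⟨hsb, hl.1⟩, ?_⟩, by rw [prodG_cons]⟩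
        intro x hx
        rcases List.mem_cons.mp hx with rfl | hx
        · exact hL
        · exact hl.2 x hx

theorem exists_red (w : Monoid.Coprod F G) :
    ∃ l : List (F ⊕ G), RedWord l ∧ prodG l = w := by
  induction w using Monoid.Coprod.induction_on' with
  | one => exact ⟨[], ⟨List.isChain_nil, by simp⟩, rfl⟩
  | inl_mul m x hx =>
    obtain ⟨l, hl, rfl⟩ := hx
    obtain ⟨l', hl', he⟩ := prepend (Sum.inl m) l hl
    exact ⟨l', hl', by rw [he]; rfl⟩
  | inr_mul n x hx =>
    obtain ⟨l, hl, rfl⟩ := hx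
    obtain ⟨l', hl', he⟩ := prepend (Sum.inr n) l hl
    exact ⟨l', hl', by rw [he]; rfl⟩

theorem Phi_ne_one {w : Monoid.Coprod F G} (hw : w ≠ 1) : Phi w ≠ 1 := by
  obtain ⟨l, hl, rfl⟩ := exists_red w
  cases l with
  | nil => exact absurd rfl hw
  | cons L l' =>
    intro hPhi
    have hk := (key _ hl).1
    rw [hPhi, PowerSeries.coeff_one, if_neg (by simp)] at hk
    have h1 : ((0 : AMA F G)) (tstar (L :: l')) = 0 := rfl
    rw [h1] at hk
    have : ((-1 : ℤ)) ^ (L :: l').length ≠ 0 := pow_ne_zero _ (by norm_num)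
    exact this hk.symm

end Words

section Assembly

variable {F G : Type*} [Group F] [Group G] {ltF : F → F → Prop} {ltG : G → G → Prop}

open TStr PowerSeries

theorem coeff_lmul_vanish (a x : RH F G) (d : ℕ) (hv : ∀ m < d, (coeff (R := AMA F G) m) x = 0) :
    (∀ m < d, (coeff (R := AMA F G) m) (a * x) = 0) ∧
      (coeff (R := AMA F G) d) (a * x) = (constantCoeff (R := AMA F G)) a * (coeff (R := AMA F G) d) x := by
  constructor
  · intro m hm
    rw [coeff_mul]
    apply Finset.sum_eq_zero
    rintro ⟨i, j⟩ hij
    have hij' : i + j = m := Finset.HasAntidiagonal.mem_antidiagonal.mp hij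
    rw [hv j (by omega), mul_zero]
  · rw [coeff_mul]
    rw [Finset.sum_eq_single ((0 : ℕ), d)]
    · rw [coeff_zero_eq_constantCoeff_apply]
    · rintro ⟨i, j⟩ hij hne
      have hij' : i + j = d := Finset.HasAntidiagonal.mem_antidiagonal.mp hij
      by_cases hj : j < d
      · rw [hv j hj, mul_zero]
      · exfalso
        exact hne (by
          have : j = d := by omega
          subst this
          have : i = 0 := by omega
          subst this
          rfl)
    · intro hmem
      exact absurd (Finset.HasAntidiagonal.mem_antidiagonal.mpr (by omega)) hmem

theorem coeff_rmul_vanish (x b : RH F G) (d : ℕ) (hv : ∀ m < d, (coeff (R := AMA F G) m) x = 0) :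
    (∀ m < d, (coeff (R := AMA F G) m) (x * b) = 0) ∧
      (coeff (R := AMA F G) d) (x * b) = (coeff (R := AMA F G) d) x * (constantCoeff (R := AMA F G)) b := by
  constructor
  · intro m hm
    rw [coeff_mul]
    apply Finset.sum_eq_zero
    rintro ⟨i, j⟩ hij
    have hij' : i + j = m := Finset.HasAntidiagonal.mem_antidiagonal.mp hij
    rw [hv i (by omega), zero_mul]
  · rw [coeff_mul]
    rw [Finset.sum_eq_single ((d : ℕ), 0)]
    · rw [coeff_zero_eq_constantCoeff_apply]
    · rintro ⟨i, j⟩ hij hne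
      have hij' : i + j = d := Finset.HasAntidiagonal.mem_antidiagonal.mp hij
      by_cases hi : i < d
      · rw [hv i hi, zero_mul]
      · exfalso
        exact hne (by
          have : i = d := by omega
          subst this
          have : j = 0 := by omega
          subst this
          rfl)
    · intro hmem
      exact absurd (Finset.HasAntidiagonal.mem_antidiagonal.mpr (by omega)) hmem

theorem cc_Phi_eq_one {w : Monoid.Coprod F G} (hw : canonicalMap F G w = 1) :
    (constantCoeff (R := AMA F G)) (Phi w) = 1 := by
  rw [ccPhi, hw, map_one emb, ← MonoidAlgebra.one_def]

theorem coeff_zero_vsub {w : Monoid.Coprod F G} (hw : canonicalMap F G w = 1) :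
    (coeff (R := AMA F G) 0) (Phi w - 1) = 0 := by
  rw [map_sub, coeff_zero_eq_constantCoeff_apply, cc_Phi_eq_one hw, PowerSeries.coeff_one,
    if_pos rfl, sub_self]

/-- the positive cone on the free product -/
def posG (ltF : F → F → Prop) (ltG : G → G → Prop) (w : Monoid.Coprod F G) : Prop :=
  ltH ltF ltG 1 (canonicalMap F G w) ∨
    (canonicalMap F G w = 1 ∧ ∃ d, (∀ m < d, (coeff (R := AMA F G) m) (Phi w - 1) = 0) ∧
      posA ltF ltG ((coeff (R := AMA F G) d) (Phi w - 1)))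

theorem posA_zero_false : ¬ posA ltF ltG (0 : AMA F G) := by
  rintro ⟨t, ht, -⟩
  rw [MonoidAlgebra.coeff_zero, Finsupp.zero_apply] at ht
  omega

variable (hF : IsBiOrder ltF) (hG : IsBiOrder ltG)
include hF hG

theorem posG_one_false : ¬ posG ltF ltG (1 : Monoid.Coprod F G) := by
  rintro (h | ⟨-, d, -, hpos⟩)
  · rw [map_one] at h
    exact ltH_irrefl hF hG _ h
  · rw [Phi_one, sub_self, map_zero] at hpos
    exact posA_zero_false hpos

theorem posG_mul {w w' : Monoid.Coprod F G} (h : posG ltF ltG w) (h' : posG ltF ltG w') :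
    posG ltF ltG (w * w') := by
  rcases h with h | ⟨ha, d, hmin, hpos⟩
  · rcases h' with h' | ⟨ha', -, -, -⟩
    · left
      rw [map_mul]
      refine ltH_trans hF hG h ?_
      have := ltH_mull hF hG (c := canonicalMap F G w) h'
      rw [mul_one] at this
      exact this
    · left
      rw [map_mul, ha', mul_one]
      exact h
  · rcases h' with h' | ⟨ha', d', hmin', hpos'⟩
    · left
      rw [map_mul, ha, one_mul]
      exact h'
    · right
      refine ⟨by rw [map_mul, ha, ha', one_mul], ?_⟩
      set v := Phi w - 1 with hv
      set v' := Phi w' - 1 with hv'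
      have hsplit : Phi (w * w') - 1 = v + v' + v * v' := by
        rw [Phi_mul, hv, hv']
        noncomm_ring
      have hv'0 : (coeff (R := AMA F G) 0) v' = 0 := coeff_zero_vsub ha'
      have hvv' : ∀ m, m ≤ d → (coeff (R := AMA F G) m) (v * v') = 0 := by
        intro m hm
        rw [coeff_mul]
        apply Finset.sum_eq_zero
        rintro ⟨i, j⟩ hij
        have hij' : i + j = m := Finset.HasAntidiagonal.mem_antidiagonal.mp hij
        by_cases hi : i < d
        · rw [hmin i hi, zero_mul]
        · have : j = 0 := by omega
          subst this
          rw [hv'0, mul_zero]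
      rcases lt_trichotomy d d' with hdd | rfl | hdd
      · refine ⟨d, ?_, ?_⟩
        · intro m hm
          rw [hsplit, map_add, map_add, hmin m hm, hmin' m (by omega),
            hvv' m (by omega), add_zero, add_zero]
        · rw [hsplit, map_add, map_add, hmin' d (by omega), hvv' d (by omega), add_zero, add_zero]
          exact hpos
      · refine ⟨d, ?_, ?_⟩
        · intro m hm
          rw [hsplit, map_add, map_add, hmin m hm, hmin' m hm,
            hvv' m (by omega), add_zero, add_zero]
        · rw [hsplit, map_add, map_add, hvv' d (by omega), add_zero]
          exact posA_add hF hG hpos hpos'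
      · refine ⟨d', ?_, ?_⟩
        · intro m hm
          rw [hsplit, map_add, map_add, hmin m (by omega), hmin' m hm,
            hvv' m (by omega), add_zero, add_zero]
        · rw [hsplit, map_add, map_add, hmin d' (by omega), hvv' d' (by omega), zero_add, add_zero]
          exact hpos'

theorem posG_conj {w : Monoid.Coprod F G} (γ : Monoid.Coprod F G) (h : posG ltF ltG w) :
    posG ltF ltG (γ * w * γ⁻¹) := by
  rcases h with h | ⟨ha, d, hmin, hpos⟩
  · left
    rw [map_mul, map_mul, map_inv]
    have := ltH_conj hF hG (canonicalMap F G γ) h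
    rw [mul_one, mul_inv_cancel] at this
    exact this
  · right
    have hinv : Phi γ * Phi γ⁻¹ = 1 := by
      rw [← Phi_mul, mul_inv_cancel, Phi_one]
    have hα : canonicalMap F G (γ * w * γ⁻¹) = 1 := by
      rw [map_mul, map_mul, ha, mul_one, map_inv, mul_inv_cancel]
    refine ⟨hα, ?_⟩
    have hsplit : Phi (γ * w * γ⁻¹) - 1 = Phi γ * (Phi w - 1) * Phi γ⁻¹ := by
      rw [Phi_mul, Phi_mul]
      rw [mul_sub, sub_mul, mul_one]
      rw [hinv]
    obtain ⟨hL1, hL2⟩ := coeff_lmul_vanish (Phi γ) (Phi w - 1) d hmin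
    obtain ⟨hR1, hR2⟩ := coeff_rmul_vanish (Phi γ * (Phi w - 1)) (Phi γ⁻¹) d hL1
    refine ⟨d, ?_, ?_⟩
    · intro m hm
      rw [hsplit]
      exact hR1 m hm
    · rw [hsplit, hR2, hL2]
      rw [ccPhi, ccPhi, map_inv]
      exact posA_transl hF hG _ _ hpos

theorem posG_tri {w : Monoid.Coprod F G} (hw : w ≠ 1) :
    posG ltF ltG w ∨ posG ltF ltG w⁻¹ := by
  by_cases ha : canonicalMap F G w = 1
  · -- use the Magnus coefficients
    have hv : Phi w - 1 ≠ 0 := sub_ne_zero.mpr (Phi_ne_one hw)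
    have hex : ∃ n, (coeff (R := AMA F G) n) (Phi w - 1) ≠ 0 := by
      by_contra hc
      push_neg at hc
      exact hv (PowerSeries.ext fun n => by rw [hc n, map_zero])
    classical
    set d := Nat.find hex with hd
    have hspec : (coeff (R := AMA F G) d) (Phi w - 1) ≠ 0 := Nat.find_spec hex
    have hmin : ∀ m < d, (coeff (R := AMA F G) m) (Phi w - 1) = 0 := by
      intro m hm
      by_contra hc
      have hle : d ≤ m := hd ▸ Nat.find_le hc
      omega
    have ha' : canonicalMap F G w⁻¹ = 1 := by rw [map_inv, ha, inv_one]
    have hrel : Phi w⁻¹ - 1 = -(Phi w⁻¹ * (Phi w - 1)) := by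
      have hinv : Phi w⁻¹ * Phi w = 1 := by
        rw [← Phi_mul, inv_mul_cancel, Phi_one]
      rw [mul_sub, hinv, mul_one, neg_sub]
    obtain ⟨hL1, hL2⟩ := coeff_lmul_vanish (Phi w⁻¹) (Phi w - 1) d hmin
    have hccinv : (constantCoeff (R := AMA F G)) (Phi w⁻¹) = 1 := cc_Phi_eq_one ha'
    rcases posA_tri hF hG (x := (coeff (R := AMA F G) d) (Phi w - 1)) hspec with hp | hp
    · exact Or.inl (Or.inr ⟨ha, d, hmin, hp⟩)
    · refine Or.inr (Or.inr ⟨ha', d, ?_, ?_⟩)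
      · intro m hm
        rw [hrel, map_neg, hL1 m hm, neg_zero]
      · rw [hrel, map_neg, hL2, hccinv, one_mul]
        exact hp
  · rcases ltH_one_lt_cases hF hG ha with h | h
    · exact Or.inl (Or.inl h)
    · right
      left
      rw [map_inv]
      exact h

end Assembly

end CMKC

namespace CMKC

section Final

variable {F G : Type*} [Group F] [Group G] {ltF : F → F → Prop} {ltG : G → G → Prop}

theorem canonicalMap_inl (x : F) :
    canonicalMap F G (Monoid.Coprod.inl x) = (x, 1) := rfl

theorem canonicalMap_inr (x : G) :
    canonicalMap F G (Monoid.Coprod.inr x) = (1, x) := rfl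

variable (hF : IsBiOrder ltF) (hG : IsBiOrder ltG)
include hF hG

theorem posG_alpha_one_ne {w : Monoid.Coprod F G} (h : posG ltF ltG w)
    (hw : w = 1) : False := by
  subst hw
  exact posG_one_false hF hG h
omit hF hG

theorem ltF_one_iff (hF : IsBiOrder ltF) (x y : F) : ltF x y ↔ ltF 1 (x⁻¹ * y) := by
  constructor
  · intro h
    have := hF.2.2 _ _ x⁻¹ h
    rwa [inv_mul_cancel] at this
  · intro h
    have := hF.2.2 _ _ x h
    rwa [mul_one, mul_inv_cancel_left] at this

end Final

end CMKC

/-- The free product of two ordered groups admits a bi-invariant ordering extending the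
given orderings for which the kernel of the canonical homomorphism `F * G → F × G`
is a convex subgroup. -/
theorem canonical_map_kernel_convex {F G : Type*} [Group F] [Group G]
    (ltF : F → F → Prop) (ltG : G → G → Prop)
    (hF : IsBiOrder ltF) (hG : IsBiOrder ltG) :
    ∃ lt : Monoid.Coprod F G → Monoid.Coprod F G → Prop,
      IsBiOrder lt ∧
      (∀ x y : F, ltF x y ↔ lt (Monoid.Coprod.inl x) (Monoid.Coprod.inl y)) ∧
      (∀ x y : G, ltG x y ↔ lt (Monoid.Coprod.inr x) (Monoid.Coprod.inr y)) ∧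
      ∀ c c' x : Monoid.Coprod F G,
        c ∈ (canonicalMap F G).ker → c' ∈ (canonicalMap F G).ker →
        lt c x → lt x c' → x ∈ (canonicalMap F G).ker := by
  classical
  refine ⟨fun x y => CMKC.posG ltF ltG (x⁻¹ * y), ⟨?_, ?_, ?_⟩, ?_, ?_, ?_⟩
  · -- strict total order
    refine { trichotomous := ?_, irrefl := ?_, trans := ?_ }
    · intro x y hn1 hn2
      by_cases hxy : x = y
      · exact hxy
      · have hne : x⁻¹ * y ≠ 1 := by
          intro h
          exact hxy (by rw [← mul_one x, ← h, mul_inv_cancel_left])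
        rcases CMKC.posG_tri hF hG hne with h | h
        · exact absurd h hn1
        · refine absurd ?_ hn2
          rwa [mul_inv_rev, inv_inv] at h
    · intro x h
      rw [inv_mul_cancel] at h
      exact CMKC.posG_one_false hF hG h
    · intro x y z h1 h2
      have := CMKC.posG_mul hF hG h1 h2
      have e : (x⁻¹ * y) * (y⁻¹ * z) = x⁻¹ * z := by group
      rwa [e] at this
  · -- right invariance
    intro x y z h
    have := CMKC.posG_conj hF hG z⁻¹ h
    rw [inv_inv] at this
    have e : z⁻¹ * (x⁻¹ * y) * z = (x * z)⁻¹ * (y * z) := by group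
    rwa [e] at this
  · -- left invariance
    intro x y z h
    have e : (z * x)⁻¹ * (z * y) = x⁻¹ * y := by group
    rwa [e]
  · -- F embedding
    intro x y
    have e : (Monoid.Coprod.inl x)⁻¹ * Monoid.Coprod.inl y
        = (Monoid.Coprod.inl (x⁻¹ * y) : Monoid.Coprod F G) := by
      rw [map_mul, map_inv]
    show ltF x y ↔ CMKC.posG ltF ltG ((Monoid.Coprod.inl x)⁻¹ * Monoid.Coprod.inl y)
    rw [e]
    constructor
    · intro h
      left
      rw [CMKC.canonicalMap_inl]
      exact Or.inl ((CMKC.ltF_one_iff hF x y).mp h)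
    · rintro (h | ⟨ha, d, -, hpos⟩)
      · rw [CMKC.canonicalMap_inl] at h
        rcases h with h | ⟨-, h⟩
        · exact (CMKC.ltF_one_iff hF x y).mpr h
        · exact absurd h (hG.lt_irrefl 1)
      · exfalso
        rw [CMKC.canonicalMap_inl] at ha
        have hx1 : x⁻¹ * y = 1 := by
          have := congrArg Prod.fst ha
          simpa using this
        rw [hx1, map_one, CMKC.Phi_one, sub_self, map_zero] at hpos
        exact CMKC.posA_zero_false hpos
  · -- G embedding
    intro x y
    have e : (Monoid.Coprod.inr x)⁻¹ * Monoid.Coprod.inr y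
        = (Monoid.Coprod.inr (x⁻¹ * y) : Monoid.Coprod F G) := by
      rw [map_mul, map_inv]
    show ltG x y ↔ CMKC.posG ltF ltG ((Monoid.Coprod.inr x)⁻¹ * Monoid.Coprod.inr y)
    rw [e]
    constructor
    · intro h
      left
      rw [CMKC.canonicalMap_inr]
      exact Or.inr ⟨rfl, (CMKC.ltF_one_iff hG x y).mp h⟩
    · rintro (h | ⟨ha, d, -, hpos⟩)
      · rw [CMKC.canonicalMap_inr] at h
        rcases h with h | ⟨-, h⟩
        · exact absurd h (hF.lt_irrefl 1)
        · exact (CMKC.ltF_one_iff hG x y).mpr h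
      · exfalso
        rw [CMKC.canonicalMap_inr] at ha
        have hx1 : x⁻¹ * y = 1 := by
          have := congrArg Prod.snd ha
          simpa using this
        rw [hx1, map_one, CMKC.Phi_one, sub_self, map_zero] at hpos
        exact CMKC.posA_zero_false hpos
  · -- convexity of the kernel
    intro c c' x hc hc' h1 h2
    rw [MonoidHom.mem_ker] at hc hc' ⊢
    have e1 : canonicalMap F G (c⁻¹ * x) = canonicalMap F G x := by
      rw [map_mul, map_inv, hc, inv_one, one_mul]
    have e2 : canonicalMap F G (x⁻¹ * c') = (canonicalMap F G x)⁻¹ := by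
      rw [map_mul, map_inv, hc', mul_one]
    rcases h1 with h1 | ⟨ha, -⟩
    · rcases h2 with h2 | ⟨ha', -⟩
      · rw [e1] at h1
        rw [e2] at h2
        exact absurd h2 (fun hh => CMKC.ltH_not_both hF hG h1 hh)
      · rw [e2] at ha'
        exact inv_eq_one.mp ha'
    · rw [e1] at ha
      exact ha
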